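/- Let G be a finite group, let k be a field, and let k[G] be the group algebra of G over k with its standard Hopf algebra structure. Then for every integer n ≥ 1, the n-th indicator of k[G] equals the image in k of the number of solutions to g^n = 1 in G: ν_n(k[G]) = (#{g ∈ G : g^n = 1_G} : k), i.e. the cardinality #{g ∈ G : g^n = 1_G} reduced modulo the characteristic of k. -/

import Mathlib

open scoped TensorProduct

noncomputable section GroupAlgebraHopf

variable (k G : Type*) [CommSemiring k] [Group G]

/-- Comultiplication `Δ` on `k[G]`: linear extension of `g ↦ g ⊗ g`. -/
def groupAlgebraComul : MonoidAlgebra k G →ₗ[k] MonoidAlgebra k G ⊗[k] MonoidAlgebra k G :=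
  (Finsupp.lsum k fun g : G =>
    LinearMap.toSpanSingleton k _
      (MonoidAlgebra.single g (1 : k) ⊗ₜ[k] MonoidAlgebra.single g (1 : k))) ∘ₗ
    (MonoidAlgebra.coeffLinearEquiv k).toLinearMap

/-- Counit `ε` on `k[G]`: linear extension of `g ↦ 1`. -/
def groupAlgebraCounit : MonoidAlgebra k G →ₗ[k] k :=
  (Finsupp.lsum k fun _ : G => LinearMap.id) ∘ₗ (MonoidAlgebra.coeffLinearEquiv k).toLinearMap

/-- Antipode `S` on `k[G]`: linear extension of `g ↦ g⁻¹`. -/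
def groupAlgebraAntipode : MonoidAlgebra k G →ₗ[k] MonoidAlgebra k G :=
  MonoidAlgebra.mapDomainLinearMap k k fun g : G => g⁻¹

/-- Sweedler power maps `P^(n)` on `k[G]`: `P^(0) = u ∘ ε`, `P^(n+1) = m ∘ (P^(n) ⊗ id) ∘ Δ`. -/
def groupAlgebraSweedlerPower : ℕ → MonoidAlgebra k G →ₗ[k] MonoidAlgebra k G
  | 0 => (Algebra.linearMap k (MonoidAlgebra k G)) ∘ₗ groupAlgebraCounit k G
  | n + 1 => (LinearMap.mul' k (MonoidAlgebra k G)) ∘ₗ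
      (TensorProduct.map (groupAlgebraSweedlerPower n) LinearMap.id) ∘ₗ groupAlgebraComul k G

/-- The `n`-th indicator `ν_n(k[G]) = Tr(S ∘ P^(n-1))`. -/
def groupAlgebraIndicator (n : ℕ) : k :=
  LinearMap.trace k (MonoidAlgebra k G)
    (groupAlgebraAntipode k G ∘ₗ groupAlgebraSweedlerPower k G (n - 1))

end GroupAlgebraHopf

lemma groupAlgebra_sweedlerPower_single (k G : Type*) [CommSemiring k] [Group G] (m : ℕ)
    (g : G) :
    groupAlgebraSweedlerPower k G m (MonoidAlgebra.single g 1) =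
      MonoidAlgebra.single (g ^ m) 1 := by
  induction m with
  | zero =>
      rw [groupAlgebraSweedlerPower, LinearMap.comp_apply, groupAlgebraCounit]
      rw [LinearMap.comp_apply, LinearEquiv.coe_coe, MonoidAlgebra.coeffLinearEquiv_apply,
        MonoidAlgebra.coeff_single]
      erw [Finsupp.lsum_single]
      rw [LinearMap.id_apply, Algebra.linearMap_apply, map_one, pow_zero,
        MonoidAlgebra.one_def]
  | succ m ih =>
      rw [groupAlgebraSweedlerPower, LinearMap.comp_apply, LinearMap.comp_apply,
        groupAlgebraComul]
      rw [LinearMap.comp_apply, LinearEquiv.coe_coe, MonoidAlgebra.coeffLinearEquiv_apply,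
        MonoidAlgebra.coeff_single]
      erw [Finsupp.lsum_single]
      rw [LinearMap.toSpanSingleton_apply, one_smul,
        TensorProduct.map_tmul, LinearMap.id_apply, ih, LinearMap.mul'_apply,
        MonoidAlgebra.single_mul_single, mul_one, pow_succ]

lemma groupAlgebra_antipode_single (k G : Type*) [CommSemiring k] [Group G] (g : G) :
    groupAlgebraAntipode k G (MonoidAlgebra.single g 1) =
      MonoidAlgebra.single g⁻¹ 1 := by
  rw [groupAlgebraAntipode]
  exact MonoidAlgebra.mapDomainLinearMap_single _ _ _

/-- For a finite group `G` and a field `k`, the `n`-th indicator of the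
group algebra `k[G]` (for `n ≥ 1`) equals the image in `k` of the number of solutions of
`g ^ n = 1` in `G`. -/
theorem groupAlgebra_indicator_eq_card_solutions
    (k : Type*) (G : Type*) [Field k] [Group G] [Finite G] (n : ℕ) (hn : 1 ≤ n) :
    groupAlgebraIndicator k G n = (Nat.card {g : G // g ^ n = 1} : k) := by
  cases nonempty_fintype G
  classical
  obtain ⟨m, rfl⟩ : ∃ m, n = m + 1 := ⟨n - 1, by omega⟩
  let b : Module.Basis G k (MonoidAlgebra k G) := MonoidAlgebra.basis G k
  rw [groupAlgebraIndicator, LinearMap.trace_eq_matrix_trace k b, Matrix.trace]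
  have key : ∀ g : G, (groupAlgebraAntipode k G ∘ₗ groupAlgebraSweedlerPower k G (m + 1 - 1))
      (b g) = MonoidAlgebra.single ((g ^ m)⁻¹) 1 := by
    intro g
    have hb : b g = MonoidAlgebra.single g 1 := rfl
    rw [LinearMap.comp_apply, hb, Nat.add_sub_cancel, groupAlgebra_sweedlerPower_single,
      groupAlgebra_antipode_single]
  have diag : ∀ g : G, (LinearMap.toMatrix b b
      (groupAlgebraAntipode k G ∘ₗ groupAlgebraSweedlerPower k G (m + 1 - 1))).diag g
      = if g ^ (m + 1) = 1 then (1:k) else 0 := by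
    intro g
    rw [Matrix.diag_apply, LinearMap.toMatrix_apply, key]
    have hiff : ((g ^ m)⁻¹ = g) ↔ (g ^ (m + 1) = 1) := by
      rw [inv_eq_iff_mul_eq_one, ← pow_succ]
    have : (b.repr (MonoidAlgebra.single ((g ^ m)⁻¹) 1)) g
        = (Finsupp.single ((g ^ m)⁻¹) (1:k)) g := rfl
    rw [this, Finsupp.single_apply, if_congr hiff rfl rfl]
  rw [Finset.sum_congr rfl (fun g _ => diag g), Finset.sum_boole, Nat.card_eq_fintype_card,
    Fintype.card_subtype]
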